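/- Let g be a homeomorphism of a compact metrizable space ∂X with north-south dynamics with fixed points γ₊, γ₋, and let h be a homeomorphism such that {hγ₊, hγ₋} ∩ {γ₊, γ₋} = ∅. Let μ_i (i ∈ ℕ) be the probability measure on the group generated by g,h with μ_i(g) = 1 − 1/i and μ_i(h) = 1/i, and let ν_i be a μ_i-stationary Borel probability measure on ∂X. Then any weak-* limit of the sequence (ν_i) is the Dirac measure δ_{γ₊}. -/

import Mathlib

open MeasureTheory
open scoped ENNReal NNReal

/-- North-south dynamics for a homeomorphism `g` with fixed points `γp ≠ γm`. -/
def NorthSouth {Y : Type*} [TopologicalSpace Y] (g : Y ≃ₜ Y) (γp γm : Y) : Prop :=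
  γp ≠ γm ∧ g γp = γp ∧ g γm = γm ∧
  (∀ U : Set Y, IsOpen U → γp ∈ U → ∀ K : Set Y, IsCompact K → γm ∉ K →
    ∃ N : ℕ, ∀ n ≥ N, (⇑g)^[n] '' K ⊆ U) ∧
  (∀ U : Set Y, IsOpen U → γm ∈ U → ∀ K : Set Y, IsCompact K → γp ∉ K →
    ∃ N : ℕ, ∀ n ≥ N, (⇑g.symm)^[n] '' K ⊆ U)

/-- Image under iterates of the inverse is preimage under iterates. -/
lemma NS_iter_symm_image {Y : Type*} [TopologicalSpace Y] (e : Y ≃ₜ Y) (n : ℕ) (S : Set Y) :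
    (⇑e.symm)^[n] '' S = (⇑e)^[n] ⁻¹' S := by
  exact congrFun (Set.image_eq_preimage_of_inverse
    (Function.LeftInverse.iterate (fun a => e.apply_symm_apply a) n)
    (Function.RightInverse.iterate (fun a => e.symm_apply_apply a) n)) S

/-- Separation of a point from a closed set by an open set with disjoint closure. -/
lemma NS_exists_sep {Y : Type*} [MetricSpace Y] (x : Y) (C : Set Y) (hC : IsClosed C)
    (hx : x ∉ C) : ∃ U : Set Y, IsOpen U ∧ x ∈ U ∧ Disjoint (closure U) C := by
  rcases C.eq_empty_or_nonempty with rfl | hne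
  · exact ⟨Set.univ, isOpen_univ, trivial, by simp⟩
  · have hr : 0 < Metric.infDist x C := (hC.notMem_iff_infDist_pos hne).mp hx
    refine ⟨Metric.ball x (Metric.infDist x C / 2), Metric.isOpen_ball,
      Metric.mem_ball_self (by linarith), ?_⟩
    rw [Set.disjoint_left]
    intro y hy hyC
    have h1 : dist y x ≤ Metric.infDist x C / 2 := by
      have := Metric.closure_ball_subset_closedBall hy
      simpa [Metric.mem_closedBall] using this
    have h2 : Metric.infDist x C ≤ dist x y := Metric.infDist_le_dist_of_mem hyC
    rw [dist_comm] at h2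
    linarith

/-- The key one-measure estimate: for a stationary measure, the measure of a set
`V` with `g ⁻¹' V ⊆ V` is at most the measure of `h ⁻¹' V`. -/
lemma NS_stationary_le {Y : Type*} [TopologicalSpace Y] [MeasurableSpace Y]
    [OpensMeasurableSpace Y] (g h : Y ≃ₜ Y) (μ : Measure Y) [IsProbabilityMeasure μ]
    (t : ENNReal) (ht0 : t ≠ 0) (ht1 : t ≤ 1)
    (hstat : ∀ A : Set Y, MeasurableSet A →
      μ A = (1 - t) * μ (⇑g ⁻¹' A) + t * μ (⇑h ⁻¹' A))
    (V : Set Y) (hVopen : IsOpen V) (hV : ⇑g ⁻¹' V ⊆ V) :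
    μ V ≤ μ (⇑h ⁻¹' V) := by
  set s : ENNReal := 1 - t with hs
  have hs1 : s ≤ 1 := tsub_le_self
  have hslt : s < 1 := ENNReal.sub_lt_self ENNReal.one_ne_top one_ne_zero ht0
  set c : ENNReal := μ (⇑h ⁻¹' V) with hc
  -- iterated preimages
  have hmeas : ∀ k : ℕ, MeasurableSet ((⇑g)^[k] ⁻¹' V) := fun k =>
    (hVopen.preimage (g.continuous.iterate k)).measurableSet
  have hsub : ∀ k : ℕ, (⇑g)^[k] ⁻¹' V ⊆ V := by
    intro k
    induction k with
    | zero => simp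
    | succ n ih =>
      rw [Function.iterate_succ']
      intro x hx
      exact ih (hV hx)
  have hstep : ∀ k : ℕ, μ ((⇑g)^[k] ⁻¹' V) ≤ s * μ ((⇑g)^[k+1] ⁻¹' V) + t * c := by
    intro k
    have := hstat _ (hmeas k)
    rw [this]
    have e1 : ⇑g ⁻¹' ((⇑g)^[k] ⁻¹' V) = (⇑g)^[k+1] ⁻¹' V := by
      rw [Function.iterate_succ, Set.preimage_comp]
    have e2 : μ (⇑h ⁻¹' ((⇑g)^[k] ⁻¹' V)) ≤ c := by
      exact measure_mono (Set.preimage_mono (hsub k))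
    rw [e1]
    exact add_le_add le_rfl (mul_le_mul_right e2 t)
  have key : ∀ n : ℕ, μ V ≤ s ^ n * μ ((⇑g)^[n] ⁻¹' V) + (1 - s ^ n) * c := by
    intro n
    induction n with
    | zero => simp
    | succ n ih =>
      refine ih.trans ?_
      have h1 : s ^ n * μ ((⇑g)^[n] ⁻¹' V) ≤ s ^ n * (s * μ ((⇑g)^[n+1] ⁻¹' V) + t * c) :=
        mul_le_mul_right (hstep n) _
      have h2 : s ^ n * (s * μ ((⇑g)^[n+1] ⁻¹' V) + t * c)
          = s ^ (n+1) * μ ((⇑g)^[n+1] ⁻¹' V) + s ^ n * t * c := by ring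
      have h3 : s ^ n * t * c + (1 - s ^ n) * c = (1 - s ^ (n+1)) * c := by
        have hsn : s ^ (n+1) ≤ s ^ n := pow_le_pow_right_of_le_one' hs1 (Nat.le_succ n)
        have hsn1 : s ^ n ≤ 1 := pow_le_one' hs1 n
        have e : s ^ n * t = s ^ n - s ^ (n+1) := by
          have hfin : s ^ n ≠ ∞ := ENNReal.pow_ne_top (ne_top_of_le_ne_top ENNReal.one_ne_top hs1)
          have : s ^ n * t = s ^ n * (1 - s) := by
            rw [hs, ENNReal.sub_sub_cancel ENNReal.one_ne_top ht1]
          rw [this, ENNReal.mul_sub (fun _ _ => hfin)]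
          simp [pow_succ]
        rw [e, ← add_mul]
        congr 1
        rw [add_comm]
        exact tsub_add_tsub_cancel hsn1 hsn
      calc s ^ n * μ ((⇑g)^[n] ⁻¹' V) + (1 - s ^ n) * c
          ≤ (s ^ (n+1) * μ ((⇑g)^[n+1] ⁻¹' V) + s ^ n * t * c) + (1 - s ^ n) * c := by
            rw [← h2]; exact add_le_add_left h1 _
        _ = s ^ (n+1) * μ ((⇑g)^[n+1] ⁻¹' V) + (s ^ n * t * c + (1 - s ^ n) * c) := by ring
        _ = s ^ (n+1) * μ ((⇑g)^[n+1] ⁻¹' V) + (1 - s ^ (n+1)) * c := by rw [h3]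
  have bound : ∀ n : ℕ, μ V ≤ s ^ n + c := by
    intro n
    refine (key n).trans (add_le_add ?_ ?_)
    · calc s ^ n * μ ((⇑g)^[n] ⁻¹' V) ≤ s ^ n * 1 :=
        mul_le_mul_right prob_le_one _
      _ = s ^ n := mul_one _
    · calc (1 - s ^ n) * c ≤ 1 * c := mul_le_mul_left tsub_le_self _
      _ = c := one_mul _
  have hlim : Filter.Tendsto (fun n : ℕ => s ^ n + c) Filter.atTop (nhds c) := by
    have h0 : Filter.Tendsto (fun n : ℕ => s ^ n) Filter.atTop (nhds 0) :=
      ENNReal.tendsto_pow_atTop_nhds_zero_of_lt_one hslt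
    simpa using h0.add tendsto_const_nhds
  exact ge_of_tendsto' hlim bound

theorem stationary_limit_dirac {Y : Type*} [TopologicalSpace Y] [CompactSpace Y]
    [TopologicalSpace.MetrizableSpace Y] [MeasurableSpace Y] [BorelSpace Y]
    (g h : Y ≃ₜ Y) (γp γm : Y) (hns : NorthSouth g γp γm)
    (hh : ({h γp, h γm} : Set Y) ∩ {γp, γm} = ∅)
    (ν : ℕ → ProbabilityMeasure Y)
    (hstat : ∀ i : ℕ, 1 ≤ i → ∀ A : Set Y, MeasurableSet A →
      (ν i : Measure Y) A =
        (1 - 1 / (i : ENNReal)) * (ν i : Measure Y) (⇑g ⁻¹' A) +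
          (1 / (i : ENNReal)) * (ν i : Measure Y) (⇑h ⁻¹' A))
    (νinf : ProbabilityMeasure Y) (φ : ℕ → ℕ) (hφ : StrictMono φ)
    (hlim : Filter.Tendsto (fun i => ν (φ i)) Filter.atTop (nhds νinf)) :
    (νinf : Measure Y) = Measure.dirac γp := by
  letI : MetricSpace Y := TopologicalSpace.metrizableSpaceMetric Y
  obtain ⟨hne, hgp, hgm, hNSp, hNSm⟩ := hns
  -- facts from hh
  have hmem : ∀ x ∈ ({h γp, h γm} : Set Y), x ∉ ({γp, γm} : Set Y) := by
    intro x hx hx'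
    have : x ∈ ({h γp, h γm} : Set Y) ∩ {γp, γm} := ⟨hx, hx'⟩
    rw [hh] at this
    exact this
  have hhp_p : h γp ≠ γp := fun e => hmem _ (Or.inl rfl) (Or.inl e)
  have hhp_m : h γp ≠ γm := fun e => hmem _ (Or.inl rfl) (Or.inr e)
  have hhm_p : h γm ≠ γp := fun e => hmem _ (Or.inr rfl) (Or.inl e)
  have hhm_m : h γm ≠ γm := fun e => hmem _ (Or.inr rfl) (Or.inr e)
  -- Step 1: invariance of the limit measure
  have hinv : Measure.map g (νinf : Measure Y) = (νinf : Measure Y) := by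
    haveI : IsProbabilityMeasure (Measure.map g (νinf : Measure Y)) :=
      Measure.isProbabilityMeasure_map g.continuous.measurable.aemeasurable
    -- it suffices to compare lintegrals of bounded continuous functions
    apply ext_of_forall_lintegral_eq_of_IsFiniteMeasure
    intro f
    -- the lintegral identity for each stationary measure
    have hmap : ∀ i : ℕ, 1 ≤ i → (ν i : Measure Y)
        = (1 - 1 / (i : ℝ≥0∞)) • Measure.map g (ν i : Measure Y)
          + (1 / (i : ℝ≥0∞)) • Measure.map h (ν i : Measure Y) := by
      intro i hi
      ext A hA
      rw [Measure.add_apply, Measure.smul_apply, Measure.smul_apply,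
        Measure.map_apply g.continuous.measurable hA,
        Measure.map_apply h.continuous.measurable hA, smul_eq_mul, smul_eq_mul]
      exact hstat i hi A hA
    have hfg : Measurable fun x => (f x : ℝ≥0∞) :=
      (ENNReal.continuous_coe.comp f.continuous).measurable
    have hint : ∀ i : ℕ, 1 ≤ i →
        ∫⁻ x, (f x : ℝ≥0∞) ∂(ν i : Measure Y)
          = (1 - 1 / (i : ℝ≥0∞)) * ∫⁻ x, (f (g x) : ℝ≥0∞) ∂(ν i : Measure Y)
            + (1 / (i : ℝ≥0∞)) * ∫⁻ x, (f (h x) : ℝ≥0∞) ∂(ν i : Measure Y) := by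
      intro i hi
      conv_lhs => rw [hmap i hi]
      rw [lintegral_add_measure, lintegral_smul_measure, lintegral_smul_measure,
        lintegral_map hfg g.continuous.measurable, lintegral_map hfg h.continuous.measurable,
        smul_eq_mul, smul_eq_mul]
    -- convergence ingredients
    have hφ1 : ∀ᶠ i in Filter.atTop, 1 ≤ φ i := by
      filter_upwards [Filter.eventually_ge_atTop 1] with i hi
      exact le_trans hi hφ.le_apply
    have hts : Filter.Tendsto (fun i => 1 / ((φ i : ℕ) : ℝ≥0∞)) Filter.atTop (nhds 0) := by
      simp only [one_div]
      exact ENNReal.tendsto_inv_nat_nhds_zero.comp hφ.tendsto_atTop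
    have hss : Filter.Tendsto (fun i => 1 - 1 / ((φ i : ℕ) : ℝ≥0∞)) Filter.atTop (nhds 1) := by
      have := ENNReal.Tendsto.sub (tendsto_const_nhds (x := (1 : ℝ≥0∞))) hts
        (Or.inl ENNReal.one_ne_top)
      simpa using this
    set fg : BoundedContinuousFunction Y ℝ≥0 := f.compContinuous ⟨⇑g, g.continuous⟩ with hfgdef
    have hA : Filter.Tendsto (fun i => ∫⁻ x, (f x : ℝ≥0∞) ∂(ν (φ i) : Measure Y))
        Filter.atTop (nhds (∫⁻ x, (f x : ℝ≥0∞) ∂(νinf : Measure Y))) :=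
      ProbabilityMeasure.tendsto_iff_forall_lintegral_tendsto.mp hlim f
    have hB : Filter.Tendsto (fun i => ∫⁻ x, (f (g x) : ℝ≥0∞) ∂(ν (φ i) : Measure Y))
        Filter.atTop (nhds (∫⁻ x, (f (g x) : ℝ≥0∞) ∂(νinf : Measure Y))) :=
      ProbabilityMeasure.tendsto_iff_forall_lintegral_tendsto.mp hlim fg
    have hBfin : (∫⁻ x, (f (g x) : ℝ≥0∞) ∂(νinf : Measure Y)) ≠ ∞ := by
      refine ne_top_of_le_ne_top (b := (nndist f 0 : ℝ≥0∞)) ENNReal.coe_ne_top ?_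
      calc ∫⁻ x, (f (g x) : ℝ≥0∞) ∂(νinf : Measure Y)
          ≤ ∫⁻ _, (nndist f 0 : ℝ≥0∞) ∂(νinf : Measure Y) := by
            refine lintegral_mono fun x => ?_
            exact ENNReal.coe_le_coe.mpr (BoundedContinuousFunction.NNReal.upper_bound f (g x))
        _ = (nndist f 0 : ℝ≥0∞) := by simp
    have hCbd : ∀ i : ℕ, (∫⁻ x, (f (h x) : ℝ≥0∞) ∂(ν i : Measure Y)) ≤ (nndist f 0 : ℝ≥0∞) := by
      intro i
      calc ∫⁻ x, (f (h x) : ℝ≥0∞) ∂(ν i : Measure Y)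
          ≤ ∫⁻ _, (nndist f 0 : ℝ≥0∞) ∂(ν i : Measure Y) := by
            refine lintegral_mono fun x => ?_
            exact ENNReal.coe_le_coe.mpr (BoundedContinuousFunction.NNReal.upper_bound f (h x))
        _ = (nndist f 0 : ℝ≥0∞) := by simp
    have hterm2 : Filter.Tendsto
        (fun i => (1 / ((φ i : ℕ) : ℝ≥0∞)) * ∫⁻ x, (f (h x) : ℝ≥0∞) ∂(ν (φ i) : Measure Y))
        Filter.atTop (nhds 0) := by
      have hub : Filter.Tendsto (fun i => (1 / ((φ i : ℕ) : ℝ≥0∞)) * (nndist f 0 : ℝ≥0∞))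
          Filter.atTop (nhds 0) := by
        have := ENNReal.Tendsto.mul_const (b := (nndist f 0 : ℝ≥0∞)) hts
          (Or.inr ENNReal.coe_ne_top)
        simpa using this
      refine tendsto_of_tendsto_of_tendsto_of_le_of_le tendsto_const_nhds hub
        (fun i => zero_le) (fun i => mul_le_mul_right (hCbd (φ i)) _)
    have hterm1 : Filter.Tendsto
        (fun i => (1 - 1 / ((φ i : ℕ) : ℝ≥0∞)) * ∫⁻ x, (f (g x) : ℝ≥0∞) ∂(ν (φ i) : Measure Y))
        Filter.atTop (nhds (∫⁻ x, (f (g x) : ℝ≥0∞) ∂(νinf : Measure Y))) := by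
      have := ENNReal.Tendsto.mul hss (Or.inl one_ne_zero) hB (Or.inr ENNReal.one_ne_top)
      simpa using this
    have hsum : Filter.Tendsto
        (fun i => (1 - 1 / ((φ i : ℕ) : ℝ≥0∞)) * ∫⁻ x, (f (g x) : ℝ≥0∞) ∂(ν (φ i) : Measure Y)
          + (1 / ((φ i : ℕ) : ℝ≥0∞)) * ∫⁻ x, (f (h x) : ℝ≥0∞) ∂(ν (φ i) : Measure Y))
        Filter.atTop (nhds (∫⁻ x, (f (g x) : ℝ≥0∞) ∂(νinf : Measure Y))) := by
      have := hterm1.add hterm2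
      simpa using this
    have hA' : Filter.Tendsto (fun i => ∫⁻ x, (f x : ℝ≥0∞) ∂(ν (φ i) : Measure Y))
        Filter.atTop (nhds (∫⁻ x, (f (g x) : ℝ≥0∞) ∂(νinf : Measure Y))) := by
      refine hsum.congr' ?_
      filter_upwards [hφ1] with i hi
      exact (hint (φ i) hi).symm
    have : (∫⁻ x, (f x : ℝ≥0∞) ∂(νinf : Measure Y))
        = ∫⁻ x, (f (g x) : ℝ≥0∞) ∂(νinf : Measure Y) := tendsto_nhds_unique hA hA'
    rw [lintegral_map hfg g.continuous.measurable]
    exact this.symm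
  have hinv' : ∀ (A : Set Y), MeasurableSet A →
      (νinf : Measure Y) (⇑g ⁻¹' A) = (νinf : Measure Y) A := by
    intro A hA
    rw [← Measure.map_apply g.continuous.measurable hA, hinv]
  have hinvn : ∀ (n : ℕ) (A : Set Y), MeasurableSet A →
      (νinf : Measure Y) ((⇑g)^[n] ⁻¹' A) = (νinf : Measure Y) A := by
    intro n
    induction n with
    | zero => simp
    | succ n ih =>
      intro A hA
      rw [Function.iterate_succ, Set.preimage_comp]
      rw [hinv' _ ((g.continuous.measurable.iterate n) hA)]
      exact ih A hA
  -- Step 2: the limit measure vanishes on compact sets avoiding both fixed points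
  have hstar : ∀ C : Set Y, IsCompact C → γp ∉ C → ∀ U : Set Y, IsOpen U → γm ∈ U →
      (νinf : Measure Y) C ≤ (νinf : Measure Y) U := by
    intro C hC hpC U hU hmU
    obtain ⟨N, hN⟩ := hNSm U hU hmU C hC hpC
    have hsub : (⇑g)^[N] ⁻¹' C ⊆ U := by
      rw [← NS_iter_symm_image g N C]
      exact hN N le_rfl
    calc (νinf : Measure Y) C = (νinf : Measure Y) ((⇑g)^[N] ⁻¹' C) :=
          (hinvn N C hC.isClosed.measurableSet).symm
      _ ≤ (νinf : Measure Y) U := measure_mono hsub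
  have hnull : ∀ K : Set Y, IsCompact K → γp ∉ K → γm ∉ K → (νinf : Measure Y) K = 0 := by
    intro K hK hpK hmK
    obtain ⟨U, hUopen, hmU, hUdisj⟩ := NS_exists_sep γm (K ∪ {γp})
      (hK.isClosed.union isClosed_singleton) (by simp [hmK, hne.symm])
    have hCU : (νinf : Measure Y) (K ∪ closure U) ≤ (νinf : Measure Y) U := by
      refine hstar _ (hK.union (isClosed_closure.isCompact)) ?_ U hUopen hmU
      intro hmem'
      rcases hmem' with h1 | h2
      · exact hpK h1
      · exact Set.disjoint_left.mp hUdisj h2 (Or.inr rfl)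
    have hdisjKU : Disjoint K U := Set.disjoint_left.mpr
      (fun {x} hxK hxU => Set.disjoint_left.mp hUdisj (subset_closure hxU) (Or.inl hxK))
    have hKU : (νinf : Measure Y) K + (νinf : Measure Y) U
        = (νinf : Measure Y) (K ∪ U) := (measure_union hdisjKU hUopen.measurableSet).symm
    have : (νinf : Measure Y) K + (νinf : Measure Y) U ≤ 0 + (νinf : Measure Y) U := by
      rw [hKU, zero_add]
      exact le_trans (measure_mono (Set.union_subset_union_right K subset_closure)) hCU
    have := (ENNReal.add_le_add_iff_right (measure_ne_top _ _)).mp this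
    exact le_antisymm this zero_le
  -- Step 3: construct the contracting neighbourhood V of γm
  obtain ⟨V, hVopen, hmV, hVg, hVp, hVm⟩ :
      ∃ V : Set Y, IsOpen V ∧ γm ∈ V ∧ ⇑g ⁻¹' V ⊆ V ∧
        h γp ∉ closure V ∧ h γm ∉ closure V := by
    have hfix : ∀ k : ℕ, (⇑g)^[k] γm = γm := fun k => Function.iterate_fixed hgm k
    have hginj : ∀ k : ℕ, Function.Injective ((⇑g)^[k]) := fun k => g.injective.iterate k
    -- first separating neighbourhood W₁
    obtain ⟨W₁, hW₁open, hmW₁, hW₁disj⟩ := NS_exists_sep γm ({γp, h γp, h γm} : Set Y)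
      ((Set.toFinite _).isClosed)
      (by
        intro hmem'
        rcases hmem' with e | e | e
        · exact hne e.symm
        · exact hhp_m e.symm
        · exact hhm_m e.symm)
    have hpW₁ : γp ∉ closure W₁ := fun hx =>
      Set.disjoint_left.mp hW₁disj.symm (Or.inl rfl) hx
    obtain ⟨N₁, hN₁⟩ := hNSm W₁ hW₁open hmW₁ (closure W₁) isClosed_closure.isCompact hpW₁
    -- the finite forbidden set F
    set F : Set Y := {γp} ∪ ((fun k => (⇑g)^[k] (h γp)) '' Set.Iio N₁)
      ∪ ((fun k => (⇑g)^[k] (h γm)) '' Set.Iio N₁) with hFdef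
    have hFfin : F.Finite := by
      refine Set.Finite.union (Set.Finite.union (Set.finite_singleton _) ?_) ?_
      · exact (Set.finite_Iio N₁).image _
      · exact (Set.finite_Iio N₁).image _
    have hmF : γm ∉ F := by
      intro hmem'
      rcases hmem' with (e | ⟨k, _, e⟩) | ⟨k, _, e⟩
      · exact hne (Set.mem_singleton_iff.mp e).symm
      · exact hhp_m (hginj k (show (⇑g)^[k] (h γp) = (⇑g)^[k] γm by rw [hfix k]; exact e))
      · exact hhm_m (hginj k (show (⇑g)^[k] (h γm) = (⇑g)^[k] γm by rw [hfix k]; exact e))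
    -- second separating neighbourhood W₀
    obtain ⟨W₀, hW₀open, hmW₀, hW₀disj⟩ := NS_exists_sep γm (F ∪ W₁ᶜ)
      (hFfin.isClosed.union hW₁open.isClosed_compl) (by
        intro hmem'
        rcases hmem' with e | e
        · exact hmF e
        · exact e hmW₁)
    have hW₀sub : closure W₀ ⊆ W₁ := by
      intro x hx
      by_contra hxW
      exact Set.disjoint_left.mp hW₀disj hx (Or.inr hxW)
    have hpW₀ : γp ∉ closure W₀ := fun hx =>
      Set.disjoint_left.mp hW₀disj hx (Or.inl (Or.inl (Or.inl rfl)))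
    obtain ⟨N₀, hN₀⟩ := hNSm W₀ hW₀open hmW₀ (closure W₀) isClosed_closure.isCompact hpW₀
    set N : ℕ := max N₀ 1 with hNdef
    have hN1 : 1 ≤ N := le_max_right _ _
    refine ⟨⋃ k ∈ Set.Iio N, (⇑g)^[k] ⁻¹' W₀, ?_, ?_, ?_, ?_, ?_⟩
    · exact isOpen_biUnion fun k _ => hW₀open.preimage (g.continuous.iterate k)
    · exact Set.mem_biUnion (show (0:ℕ) ∈ Set.Iio N from hN1) (by simpa using hmW₀)
    · -- g ⁻¹' V ⊆ V
      intro x hx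
      simp only [Set.mem_preimage, Set.mem_iUnion, Set.mem_Iio] at hx ⊢
      obtain ⟨k, hk, hkx⟩ := hx
      rw [← Function.iterate_succ_apply] at hkx
      rcases lt_or_eq_of_le (Nat.succ_le_of_lt hk) with hlt | heq
      · exact ⟨k + 1, hlt, hkx⟩
      · refine ⟨0, lt_of_lt_of_le Nat.zero_lt_one hN1, ?_⟩
        have : x ∈ (⇑g)^[N] ⁻¹' W₀ := by rw [← heq]; exact hkx
        rw [← NS_iter_symm_image g N W₀] at this
        have : x ∈ (⇑g.symm)^[N] '' closure W₀ :=
          Set.image_mono subset_closure this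
        simpa using hN₀ N (le_max_left _ _) this
    · -- h γp ∉ closure V
      intro hx
      have hVsub : closure (⋃ k ∈ Set.Iio N, (⇑g)^[k] ⁻¹' W₀)
          ⊆ ⋃ k ∈ Set.Iio N, (⇑g)^[k] ⁻¹' closure W₀ := by
        refine closure_minimal ?_ ?_
        · exact Set.iUnion₂_mono fun k _ => Set.preimage_mono subset_closure
        · exact (Set.finite_Iio N).isClosed_biUnion
            (fun k _ => isClosed_closure.preimage (g.continuous.iterate k))
      obtain ⟨k, hk, hkx⟩ := by
        have := hVsub hx
        simpa only [Set.mem_iUnion, Set.mem_Iio, exists_prop] using this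
      rcases lt_or_ge k N₁ with hkN₁ | hkN₁
      · exact Set.disjoint_left.mp hW₀disj hkx
          (Or.inl (Or.inl (Or.inr ⟨k, hkN₁, rfl⟩)))
      · have h1 : (⇑g)^[k] (h γp) ∈ closure W₁ :=
          subset_closure (hW₀sub hkx)
        have h2 : h γp ∈ (⇑g)^[k] ⁻¹' closure W₁ := h1
        rw [← NS_iter_symm_image g k (closure W₁)] at h2
        have h3 : h γp ∈ W₁ := hN₁ k hkN₁ h2
        exact Set.disjoint_left.mp hW₁disj.symm (Or.inr (Or.inl rfl)) (subset_closure h3)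
    · -- h γm ∉ closure V
      intro hx
      have hVsub : closure (⋃ k ∈ Set.Iio N, (⇑g)^[k] ⁻¹' W₀)
          ⊆ ⋃ k ∈ Set.Iio N, (⇑g)^[k] ⁻¹' closure W₀ := by
        refine closure_minimal ?_ ?_
        · exact Set.iUnion₂_mono fun k _ => Set.preimage_mono subset_closure
        · exact (Set.finite_Iio N).isClosed_biUnion
            (fun k _ => isClosed_closure.preimage (g.continuous.iterate k))
      obtain ⟨k, hk, hkx⟩ := by
        have := hVsub hx
        simpa only [Set.mem_iUnion, Set.mem_Iio, exists_prop] using this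
      rcases lt_or_ge k N₁ with hkN₁ | hkN₁
      · exact Set.disjoint_left.mp hW₀disj hkx
          (Or.inl (Or.inr ⟨k, hkN₁, rfl⟩))
      · have h1 : (⇑g)^[k] (h γm) ∈ closure W₁ :=
          subset_closure (hW₀sub hkx)
        have h2 : h γm ∈ (⇑g)^[k] ⁻¹' closure W₁ := h1
        rw [← NS_iter_symm_image g k (closure W₁)] at h2
        have h3 : h γm ∈ W₁ := hN₁ k hkN₁ h2
        exact Set.disjoint_left.mp hW₁disj.symm (Or.inr (Or.inr rfl)) (subset_closure h3)
  -- Step 4: νinf V = 0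
  have hKmeas : IsClosed (⇑h ⁻¹' closure V) := isClosed_closure.preimage h.continuous
  have hKp : γp ∉ ⇑h ⁻¹' closure V := hVp
  have hKm : γm ∉ ⇑h ⁻¹' closure V := hVm
  have hKnull : (νinf : Measure Y) (⇑h ⁻¹' closure V) = 0 :=
    hnull _ hKmeas.isCompact hKp hKm
  have hVnull : (νinf : Measure Y) V = 0 := by
    have hle : ∀ᶠ i in Filter.atTop,
        (ν (φ i) : Measure Y) V ≤ (ν (φ i) : Measure Y) (⇑h ⁻¹' closure V) := by
      filter_upwards [Filter.eventually_ge_atTop 1] with i hi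
      have hφi : 1 ≤ φ i := le_trans hi hφ.le_apply
      have ht0 : (1 / ((φ i : ℕ) : ℝ≥0∞)) ≠ 0 := by
        simp only [ne_eq, ENNReal.div_eq_zero_iff, one_ne_zero, false_or]
        exact ENNReal.natCast_ne_top _
      have ht1 : (1 / ((φ i : ℕ) : ℝ≥0∞)) ≤ 1 := by
        rw [one_div]
        exact ENNReal.inv_le_one.mpr (by exact_mod_cast hφi)
      have := NS_stationary_le g h (ν (φ i) : Measure Y) (1 / ((φ i : ℕ) : ℝ≥0∞)) ht0 ht1
        (hstat (φ i) hφi) V hVopen hVg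
      exact this.trans (measure_mono (Set.preimage_mono subset_closure))
    have hchain : (νinf : Measure Y) V
        ≤ Filter.liminf (fun i => (ν (φ i) : Measure Y) V) Filter.atTop :=
      ProbabilityMeasure.le_liminf_measure_open_of_tendsto hlim hVopen
    have h2 : Filter.liminf (fun i => (ν (φ i) : Measure Y) V) Filter.atTop
        ≤ Filter.liminf (fun i => (ν (φ i) : Measure Y) (⇑h ⁻¹' closure V)) Filter.atTop :=
      Filter.liminf_le_liminf hle
    have h3 : Filter.liminf (fun i => (ν (φ i) : Measure Y) (⇑h ⁻¹' closure V)) Filter.atTop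
        ≤ Filter.limsup (fun i => (ν (φ i) : Measure Y) (⇑h ⁻¹' closure V)) Filter.atTop :=
      Filter.liminf_le_limsup
    have h4 : Filter.limsup (fun i => (ν (φ i) : Measure Y) (⇑h ⁻¹' closure V)) Filter.atTop
        ≤ (νinf : Measure Y) (⇑h ⁻¹' closure V) :=
      ProbabilityMeasure.limsup_measure_closed_le_of_tendsto hlim hKmeas
    have := le_trans hchain (le_trans h2 (le_trans h3 h4))
    rw [hKnull] at this
    exact le_antisymm this zero_le
  -- Step 5: every closed set avoiding γp is null
  have hclosed_null : ∀ F : Set Y, IsClosed F → γp ∉ F → (νinf : Measure Y) F = 0 := by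
    intro F hF hpF
    have h1 : (νinf : Measure Y) (F ∩ Vᶜ) = 0 := by
      refine hnull _ ((hF.inter (hVopen.isClosed_compl)).isCompact) ?_ ?_
      · exact fun hx => hpF hx.1
      · exact fun hx => hx.2 hmV
    have h2 : (νinf : Measure Y) (F ∩ V) = 0 :=
      le_antisymm (le_trans (measure_mono Set.inter_subset_right) hVnull.le) zero_le
    have : (νinf : Measure Y) F ≤ (νinf : Measure Y) (F ∩ Vᶜ) + (νinf : Measure Y) (F ∩ V) := by
      refine le_trans (measure_mono ?_) (measure_union_le _ _)
      intro x hx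
      by_cases hxV : x ∈ V
      · exact Or.inr ⟨hx, hxV⟩
      · exact Or.inl ⟨hx, hxV⟩
    rw [h1, h2, add_zero] at this
    exact le_antisymm this zero_le
  -- Step 6: conclude
  have hcompl : (νinf : Measure Y) ({γp}ᶜ) = 0 := by
    set F : ℕ → Set Y := fun n => {y | 1 / ((n : ℝ) + 1) ≤ dist y γp} with hFdef
    have hFclosed : ∀ n, IsClosed (F n) :=
      fun n => isClosed_le continuous_const (continuous_id.dist continuous_const)
    have hFnull : ∀ n, (νinf : Measure Y) (F n) = 0 := by
      intro n
      refine hclosed_null _ (hFclosed n) ?_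
      intro hmem'
      have : (0:ℝ) < 1 / ((n : ℝ) + 1) := by positivity
      have h0 : (1:ℝ) / ((n : ℝ) + 1) ≤ 0 := by simpa [F] using hmem'
      linarith
    have hmono : Monotone F := by
      intro a b hab x hx
      simp only [F, Set.mem_setOf_eq] at hx ⊢
      refine le_trans ?_ hx
      apply one_div_le_one_div_of_le (by positivity)
      have : (a:ℝ) ≤ b := by exact_mod_cast hab
      linarith
    have hUnion : ({γp}ᶜ : Set Y) = ⋃ n, F n := by
      ext x
      simp only [Set.mem_compl_iff, Set.mem_singleton_iff, Set.mem_iUnion, F,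
        Set.mem_setOf_eq]
      constructor
      · intro hx
        obtain ⟨n, hn⟩ := exists_nat_one_div_lt (dist_pos.mpr hx)
        exact ⟨n, hn.le⟩
      · rintro ⟨n, hn⟩ rfl
        have : (0:ℝ) < 1 / ((n : ℝ) + 1) := by positivity
        rw [dist_self] at hn
        linarith
    rw [hUnion, (hmono.directed_le).measure_iUnion]
    simp [hFnull]
  have hpoint : (νinf : Measure Y) {γp} = 1 := by
    have := measure_add_measure_compl (μ := (νinf : Measure Y)) (measurableSet_singleton γp)
    rw [hcompl, add_zero] at this
    rw [this]
    exact measure_univ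
  ext A hA
  rw [Measure.dirac_apply' _ hA]
  by_cases hpA : γp ∈ A
  · have h1 : (νinf : Measure Y) A ≤ 1 := prob_le_one
    have h2 : (1 : ENNReal) ≤ (νinf : Measure Y) A := by
      rw [← hpoint]
      exact measure_mono (Set.singleton_subset_iff.mpr hpA)
    simp [Set.indicator_of_mem hpA, le_antisymm h1 h2]
  · have h1 : (νinf : Measure Y) A ≤ (νinf : Measure Y) ({γp}ᶜ) :=
      measure_mono (fun x hx => fun (e : x ∈ ({γp} : Set Y)) => hpA (by rwa [Set.mem_singleton_iff.mp e] at hx))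
    rw [hcompl] at h1
    simp [Set.indicator_of_notMem hpA, le_antisymm h1 zero_le]
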